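/- arXiv:2109.06142 — 2 statements merged into one kernel-verified Lean document; each statement's English description precedes it below -/
import Mathlib

section
/- If γ ∈ Sp(2g, ℝ) has finite order and fixes a point τ ∈ ℍ_g (i.e., γ·τ = τ), then γ is diagonalizable over ℂ, and the matrix C_γ τ + D_γ is diagonalizable with eigenvalues equal to the complex conjugates λ̄₁, …, λ̄_g of a choice of g of the eigenvalues of γ (the eigenvalues of γ being λ₁,…,λ_g, λ̄₁,…,λ̄_g). -/
open Matrix Complex

def SiegelUpperHalfSpace (g : ℕ) : Set (Matrix (Fin g) (Fin g) ℂ) :=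
  {τ | τ.IsSymm ∧ Matrix.PosDef (fun i j => (τ i j).im)}

/-- `J(β, τ) = Cτ + D`. -/
noncomputable def siegelCocycle {g : ℕ} (β : Matrix (Fin g ⊕ Fin g) (Fin g ⊕ Fin g) ℝ)
    (τ : Matrix (Fin g) (Fin g) ℂ) : Matrix (Fin g) (Fin g) ℂ :=
  (β.toBlocks₂₁).map Complex.ofReal * τ + (β.toBlocks₂₂).map Complex.ofReal

/-- The Möbius action `β·τ = (Aτ + B)(Cτ + D)⁻¹`. -/
noncomputable def siegelAction {g : ℕ} (β : Matrix (Fin g ⊕ Fin g) (Fin g ⊕ Fin g) ℝ)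
    (τ : Matrix (Fin g) (Fin g) ℂ) : Matrix (Fin g) (Fin g) ℂ :=
  ((β.toBlocks₁₁).map Complex.ofReal * τ + (β.toBlocks₁₂).map Complex.ofReal) *
    (siegelCocycle β τ)⁻¹

/- ### Auxiliary lemmas -/

open Polynomial in
/-- A complex matrix of finite order is diagonalizable. -/
lemma diag_of_pow_eq_one {m : Type*} [Fintype m] [DecidableEq m]
    (M : Matrix m m ℂ) (k : ℕ) (hk : 0 < k) (h : M ^ k = 1) :
    ∃ (d : m → ℂ) (Q : Matrix m m ℂ), IsUnit Q.det ∧ M * Q = Q * Matrix.diagonal d := by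
  classical
  set f : Module.End ℂ (m → ℂ) := Matrix.toLinAlgEquiv' M with hf
  have hfk : f ^ k = 1 := by
    rw [hf, ← map_pow, h]; simp
  have hae : aeval f (X ^ k - 1 : ℂ[X]) = 0 := by
    simp [hfk]
  have hsq : Squarefree (X ^ k - 1 : ℂ[X]) := by
    refine (Polynomial.X_pow_sub_one_separable_iff.mpr ?_).squarefree
    exact_mod_cast Nat.cast_ne_zero.mpr hk.ne'
  have hss : f.IsSemisimple := Module.End.isSemisimple_of_squarefree_aeval_eq_zero hsq hae
  have htop : ⨆ μ : ℂ, f.eigenspace μ = ⊤ := by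
    have h1 := Module.End.iSup_maxGenEigenspace_eq_top f
    simp_rw [hss.isFinitelySemisimple.maxGenEigenspace_eq_eigenspace] at h1
    exact h1
  have hint : DirectSum.IsInternal f.eigenspace :=
    DirectSum.isInternal_submodule_of_iSupIndep_of_iSup_eq_top f.eigenspaces_iSupIndep htop
  let v : ∀ μ : ℂ, Module.Basis (Fin (Module.finrank ℂ (f.eigenspace μ))) ℂ (f.eigenspace μ) :=
    fun μ => Module.finBasis ℂ _
  let b0 := hint.collectedBasis v
  haveI : Fintype (Σ μ : ℂ, Fin (Module.finrank ℂ (f.eigenspace μ))) :=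
    FiniteDimensional.fintypeBasisIndex b0
  have hcard : Fintype.card (Σ μ : ℂ, Fin (Module.finrank ℂ (f.eigenspace μ)))
      = Fintype.card m := by
    rw [← Module.finrank_eq_card_basis b0, Module.finrank_pi]
  let e := Fintype.equivOfCardEq hcard
  let b := b0.reindex e
  let d : m → ℂ := fun i => (e.symm i).1
  have hb : ∀ i, f (b i) = d i • b i := by
    intro i
    have hmem : b0 (e.symm i) ∈ f.eigenspace (e.symm i).1 := hint.collectedBasis_mem v (e.symm i)
    have hbi : (b i : m → ℂ) = b0 (e.symm i) := b0.reindex_apply e i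
    rw [show d i = (e.symm i).1 from rfl, hbi]
    exact Module.End.mem_eigenspace_iff.mp hmem
  refine ⟨d, Matrix.of fun i j => b j i, ?_, ?_⟩
  · have : Matrix.of (fun i j => b j i) = (Pi.basisFun ℂ m).toMatrix ⇑b := by
      ext i j
      simp [Module.Basis.toMatrix_apply]
    rw [this]
    exact (Pi.basisFun ℂ m).isUnit_det b
  · ext i j
    have h2 : M.mulVec (b j) = d j • b j := by
      have := hb j
      rwa [hf, Matrix.toLinAlgEquiv'_apply] at this
    rw [Matrix.mul_diagonal]
    simp only [Matrix.mul_apply, Matrix.of_apply]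
    calc ∑ l, M i l * b j l = M.mulVec (b j) i := by
          simp [Matrix.mulVec, dotProduct]
      _ = d j * b j i := by rw [h2]; simp
      _ = b j i * d j := mul_comm _ _

lemma similar_of_mul_eq {m : Type*} [Fintype m] [DecidableEq m]
    {A P B : Matrix m m ℂ} (hP : IsUnit P.det) (h : A * P = P * B) :
    A = P * B * P⁻¹ := by
  calc A = A * P * P⁻¹ := by rw [mul_assoc, Matrix.mul_nonsing_inv P hP, mul_one]
    _ = P * B * P⁻¹ := by rw [h]

lemma conj_pow_mat {m : Type*} [Fintype m] [DecidableEq m]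
    {P : Matrix m m ℂ} (hP : IsUnit P.det) (X : Matrix m m ℂ) (j : ℕ) :
    (P⁻¹ * X * P) ^ j = P⁻¹ * X ^ j * P := by
  obtain ⟨u, hu⟩ := (Matrix.isUnit_iff_isUnit_det P).mpr hP
  rw [← hu, ← Matrix.coe_units_inv u, Units.conj_pow']

noncomputable def blkA {g : ℕ} (γ : Matrix (Fin g ⊕ Fin g) (Fin g ⊕ Fin g) ℝ) :=
  (γ.toBlocks₁₁).map (Complex.ofReal)
noncomputable def blkB {g : ℕ} (γ : Matrix (Fin g ⊕ Fin g) (Fin g ⊕ Fin g) ℝ) :=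
  (γ.toBlocks₁₂).map (Complex.ofReal)
noncomputable def blkC {g : ℕ} (γ : Matrix (Fin g ⊕ Fin g) (Fin g ⊕ Fin g) ℝ) :=
  (γ.toBlocks₂₁).map (Complex.ofReal)
noncomputable def blkD {g : ℕ} (γ : Matrix (Fin g ⊕ Fin g) (Fin g ⊕ Fin g) ℝ) :=
  (γ.toBlocks₂₂).map (Complex.ofReal)

lemma cmul {m : Type*} [Fintype m] (X Y : Matrix m m ℂ) :
    (X * Y).map ⇑(starRingEnd ℂ) = X.map ⇑(starRingEnd ℂ) * Y.map ⇑(starRingEnd ℂ) := by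
  simpa [RingHom.mapMatrix_apply] using map_mul (starRingEnd ℂ).mapMatrix X Y

lemma cadd {m : Type*} (X Y : Matrix m m ℂ) :
    (X + Y).map ⇑(starRingEnd ℂ) = X.map ⇑(starRingEnd ℂ) + Y.map ⇑(starRingEnd ℂ) := by
  ext i j; simp [Matrix.map_apply]

lemma gamma_mul_P₀ {g : ℕ} (γ : Matrix (Fin g ⊕ Fin g) (Fin g ⊕ Fin g) ℝ)
    (τ : Matrix (Fin g) (Fin g) ℂ)
    (hfix' : blkA γ * τ + blkB γ = τ * (blkC γ * τ + blkD γ)) :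
    γ.map Complex.ofReal * Matrix.fromBlocks τ (τ.map (starRingEnd ℂ)) 1 1 =
      Matrix.fromBlocks τ (τ.map (starRingEnd ℂ)) 1 1 *
        Matrix.fromBlocks (blkC γ * τ + blkD γ) 0 0
          ((blkC γ * τ + blkD γ).map (starRingEnd ℂ)) := by
  have hAc : (blkA γ).map ⇑(starRingEnd ℂ) = blkA γ := by
    ext i j; simp [blkA, Matrix.map_apply, Complex.conj_ofReal]
  have hBc : (blkB γ).map ⇑(starRingEnd ℂ) = blkB γ := by
    ext i j; simp [blkB, Matrix.map_apply, Complex.conj_ofReal]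
  have hCc : (blkC γ).map ⇑(starRingEnd ℂ) = blkC γ := by
    ext i j; simp [blkC, Matrix.map_apply, Complex.conj_ofReal]
  have hDc : (blkD γ).map ⇑(starRingEnd ℂ) = blkD γ := by
    ext i j; simp [blkD, Matrix.map_apply, Complex.conj_ofReal]
  have hMc : (blkC γ * τ + blkD γ).map ⇑(starRingEnd ℂ)
      = blkC γ * τ.map ⇑(starRingEnd ℂ) + blkD γ := by
    rw [cadd, cmul, hCc, hDc]
  have hconj : blkA γ * τ.map ⇑(starRingEnd ℂ) + blkB γ
      = τ.map ⇑(starRingEnd ℂ) * ((blkC γ * τ + blkD γ).map ⇑(starRingEnd ℂ)) := by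
    have h0 := congrArg (fun X => X.map ⇑(starRingEnd ℂ)) hfix'
    rw [cadd, cmul, cmul, hAc, hBc] at h0
    exact h0
  have hγ : γ.map Complex.ofReal =
      Matrix.fromBlocks (blkA γ) (blkB γ) (blkC γ) (blkD γ) := by
    ext i j
    cases i <;> cases j <;>
      simp [blkA, blkB, blkC, blkD, Matrix.toBlocks₁₁, Matrix.toBlocks₁₂,
        Matrix.toBlocks₂₁, Matrix.toBlocks₂₂]
  rw [hγ, Matrix.fromBlocks_multiply, Matrix.fromBlocks_multiply]
  simp only [mul_one, mul_zero, zero_mul, one_mul, add_zero, zero_add]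
  rw [hfix', hconj, hMc]

theorem cocycle_diagonalizable_of_fixed {g : ℕ}
    (γ : Matrix (Fin g ⊕ Fin g) (Fin g ⊕ Fin g) ℝ)
    (hγ : γ ∈ Matrix.symplecticGroup (Fin g) ℝ)
    (k : ℕ) (hk : 0 < k) (hfin : γ ^ k = 1)
    (τ : Matrix (Fin g) (Fin g) ℂ) (hτ : τ ∈ SiegelUpperHalfSpace g)
    (hfix : siegelAction γ τ = τ) :
    ∃ Λ : Fin g → ℂ,
      (∃ P : Matrix (Fin g ⊕ Fin g) (Fin g ⊕ Fin g) ℂ, IsUnit P.det ∧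
        γ.map Complex.ofReal =
          P * Matrix.diagonal (Sum.elim Λ (fun i => (starRingEnd ℂ) (Λ i))) * P⁻¹) ∧
      (∃ Q : Matrix (Fin g) (Fin g) ℂ, IsUnit Q.det ∧
        siegelCocycle γ τ =
          Q * Matrix.diagonal (fun i => (starRingEnd ℂ) (Λ i)) * Q⁻¹) := by
  classical
  have hcoc : siegelCocycle γ τ = blkC γ * τ + blkD γ := rfl
  set M : Matrix (Fin g) (Fin g) ℂ := blkC γ * τ + blkD γ with hMdef
  by_cases hM : IsUnit M.det
  swap
  · exfalso
    have hne : Nonempty (Fin g) := by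
      by_contra hne
      haveI : IsEmpty (Fin g) := not_nonempty_iff.mp hne
      exact hM (by simp [Matrix.det_isEmpty])
    have hτ0 : τ = 0 := by
      have h0 := hfix
      unfold siegelAction at h0
      rw [hcoc, Matrix.nonsing_inv_apply_not_isUnit _ hM, mul_zero] at h0
      exact h0.symm
    obtain ⟨i0⟩ := hne
    have hpd := hτ.2
    rw [hτ0] at hpd
    have hx : (fun _ : Fin g => (1 : ℝ)) ≠ 0 := by
      intro hx; exact one_ne_zero (congrFun hx i0)
    have hlt := hpd.2 (x := Finsupp.single i0 1) (by simp)
    simp [Matrix.mulVec, dotProduct] at hlt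
  -- main case
  have hfix' : blkA γ * τ + blkB γ = τ * M := by
    have h1 := hfix
    unfold siegelAction at h1
    rw [show (γ.toBlocks₁₁).map Complex.ofReal = blkA γ from rfl,
      show (γ.toBlocks₁₂).map Complex.ofReal = blkB γ from rfl, hcoc] at h1
    calc blkA γ * τ + blkB γ = (blkA γ * τ + blkB γ) * M⁻¹ * M := by
          rw [mul_assoc, Matrix.nonsing_inv_mul _ hM, mul_one]
      _ = τ * M := by rw [h1]
  have hkey := gamma_mul_P₀ γ τ hfix'
  rw [← hMdef] at hkey
  set τc := τ.map ⇑(starRingEnd ℂ) with hτcdef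
  set Mc := M.map ⇑(starRingEnd ℂ) with hMcdef
  set P₀ : Matrix (Fin g ⊕ Fin g) (Fin g ⊕ Fin g) ℂ := Matrix.fromBlocks τ τc 1 1 with hP₀def
  -- invertibility of P₀
  have hP₀ : IsUnit P₀.det := by
    set N : Matrix (Fin g) (Fin g) ℝ := Matrix.of fun i j => (τ i j).im with hNim
    have hN : (0:ℝ) < N.det := Matrix.PosDef.det_pos (A := N) hτ.2
    rw [hP₀def, Matrix.det_fromBlocks_one₂₂]
    have hdiff : τ - τc * 1 = (2 * Complex.I) • N.map Complex.ofReal := by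
      ext i j
      simp only [Matrix.sub_apply, Matrix.smul_apply, Matrix.map_apply, Matrix.mul_one,
        hτcdef, hNim, Matrix.of_apply, smul_eq_mul]
      rw [Complex.sub_conj]
      simp [Complex.ext_iff]
    rw [hdiff, Matrix.det_smul]
    have hdet0 : (N.map Complex.ofReal).det = ((N.det : ℝ) : ℂ) := by
      have h5 := RingHom.map_det Complex.ofRealHom N
      simp only [RingHom.mapMatrix_apply] at h5
      exact h5.symm
    rw [hdet0]
    refine isUnit_iff_ne_zero.mpr (mul_ne_zero (pow_ne_zero _ ?_) ?_)
    · simp [Complex.ext_iff]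
    · exact_mod_cast hN.ne'
  -- power argument
  have hγpow : (γ.map Complex.ofReal) ^ k = 1 := by
    have h2 : (Complex.ofRealHom.mapMatrix (γ : Matrix (Fin g ⊕ Fin g) (Fin g ⊕ Fin g) ℝ)) ^ k
        = 1 := by rw [← map_pow, hfin, _root_.map_one]
    simp only [RingHom.mapMatrix_apply] at h2; exact h2
  have hNdef : Matrix.fromBlocks M 0 0 Mc = P₀⁻¹ * (γ.map Complex.ofReal) * P₀ := by
    calc Matrix.fromBlocks M 0 0 Mc
        = P₀⁻¹ * (P₀ * Matrix.fromBlocks M 0 0 Mc) := by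
          rw [← mul_assoc, Matrix.nonsing_inv_mul _ hP₀, one_mul]
      _ = P₀⁻¹ * (γ.map Complex.ofReal * P₀) := by rw [← hkey]
      _ = P₀⁻¹ * (γ.map Complex.ofReal) * P₀ := by rw [mul_assoc]
  have hNk : (Matrix.fromBlocks M 0 0 Mc) ^ k = 1 := by
    rw [hNdef, conj_pow_mat hP₀, hγpow, mul_one, Matrix.nonsing_inv_mul _ hP₀]
  have hblockpow : ∀ j : ℕ, (Matrix.fromBlocks M 0 0 Mc) ^ j
      = Matrix.fromBlocks (M ^ j) 0 0 (Mc ^ j) := by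
    intro j
    induction j with
    | zero => simp [Matrix.fromBlocks_one]
    | succ j ih =>
        rw [pow_succ, ih, pow_succ, pow_succ, Matrix.fromBlocks_multiply]
        simp
  have hMk : M ^ k = 1 := by
    have h3 : Matrix.fromBlocks (M ^ k) (0 : Matrix (Fin g) (Fin g) ℂ) 0 (Mc ^ k) = 1 := by
      rw [← hblockpow]; exact hNk
    have h4 := congrArg Matrix.toBlocks₁₁ h3
    have hone : (1 : Matrix (Fin g ⊕ Fin g) (Fin g ⊕ Fin g) ℂ).toBlocks₁₁ = 1 := by
      ext i j; simp [Matrix.toBlocks₁₁, Matrix.one_apply]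
    rwa [Matrix.toBlocks_fromBlocks₁₁, hone] at h4
  obtain ⟨d, Q, hQdet, hQ⟩ := diag_of_pow_eq_one M k hk hMk
  -- conjugated diagonalization
  set Qc := Q.map ⇑(starRingEnd ℂ) with hQcdef
  have hQcdet : IsUnit Qc.det := by
    have := hQdet.map (starRingEnd ℂ)
    rwa [RingHom.map_det] at this
  have hQc : Mc * Qc = Qc * Matrix.diagonal (fun i => (starRingEnd ℂ) (d i)) := by
    have h4 := congrArg (fun X => X.map ⇑(starRingEnd ℂ)) hQ
    rw [cmul, cmul, Matrix.diagonal_map (map_zero _)] at h4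
    exact h4
  refine ⟨fun i => (starRingEnd ℂ) (d i), ?_, ?_⟩
  · -- γ part
    set S : Matrix (Fin g ⊕ Fin g) (Fin g ⊕ Fin g) ℂ := Matrix.fromBlocks 0 1 1 0 with hS
    have hSS : S * S = 1 := by
      rw [hS, Matrix.fromBlocks_multiply]
      simp [Matrix.fromBlocks_one]
    have hSdet : IsUnit S.det := by
      refine IsUnit.of_mul_eq_one S.det ?_
      rw [← Matrix.det_mul, hSS, Matrix.det_one]
    set R : Matrix (Fin g ⊕ Fin g) (Fin g ⊕ Fin g) ℂ := Matrix.fromBlocks Q 0 0 Qc with hR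
    have hRdet : IsUnit R.det := by
      rw [hR, Matrix.det_fromBlocks_zero₂₁]
      exact hQdet.mul hQcdet
    have hPdet : IsUnit (P₀ * R * S).det := by
      rw [Matrix.det_mul, Matrix.det_mul]
      exact (hP₀.mul hRdet).mul hSdet
    refine ⟨P₀ * R * S, hPdet, similar_of_mul_eq hPdet ?_⟩
    have hstep1 : Matrix.fromBlocks M 0 0 Mc * R
        = R * Matrix.fromBlocks (Matrix.diagonal d) 0 0
            (Matrix.diagonal fun i => (starRingEnd ℂ) (d i)) := by
      rw [hR, Matrix.fromBlocks_multiply, Matrix.fromBlocks_multiply]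
      simp only [mul_zero, zero_mul, add_zero, zero_add, Matrix.mul_zero, Matrix.zero_mul]
      rw [hQ, hQc]
    have hstep2 : Matrix.fromBlocks (Matrix.diagonal d) 0 0
          (Matrix.diagonal fun i => (starRingEnd ℂ) (d i)) * S
        = S * Matrix.fromBlocks (Matrix.diagonal fun i => (starRingEnd ℂ) (d i)) 0 0
            (Matrix.diagonal d) := by
      rw [hS, Matrix.fromBlocks_multiply, Matrix.fromBlocks_multiply]
      simp
    have hfinal : Matrix.fromBlocks
          (Matrix.diagonal fun i => (starRingEnd ℂ) (d i)) 0 0 (Matrix.diagonal d)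
        = Matrix.diagonal (Sum.elim (fun i => (starRingEnd ℂ) (d i))
            (fun i => (starRingEnd ℂ) ((starRingEnd ℂ) (d i)))) := by
      rw [Matrix.fromBlocks_diagonal]
      congr 1
      funext i
      cases i <;> simp
    rw [← mul_assoc, ← mul_assoc, hkey,
      mul_assoc P₀ (Matrix.fromBlocks M 0 0 Mc) R, hstep1,
      ← mul_assoc P₀ R _, mul_assoc (P₀ * R) _ S, hstep2,
      ← mul_assoc (P₀ * R) S _, hfinal]
  · -- cocycle part
    refine ⟨Q, hQdet, ?_⟩
    rw [hcoc]
    simp only [Complex.conj_conj]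
    exact similar_of_mul_eq hQdet hQ
end

section
/- If γ ∈ Sp(2g, ℤ) is nontrivial and fixes τ ∈ ℍ_g, then C_γ τ + D_γ has an eigenvalue different from 1. -/
open Matrix Complex
open Polynomial in

lemma aux_mem_spectrum_of_isRoot_charpoly {n : Type*} [Fintype n] [DecidableEq n]
    (M : Matrix n n ℂ) {μ : ℂ} (h : M.charpoly.IsRoot μ) : μ ∈ spectrum ℂ M := by
  rw [spectrum.mem_iff]
  intro hu
  rw [Matrix.isUnit_iff_isUnit_det] at hu
  have heval : M.charpoly.eval μ = (Matrix.scalar n μ - M).det := by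
    rw [Matrix.charpoly, eval_det, Matrix.matPolyEquiv_charmatrix]
    simp
  rw [IsRoot, heval] at h
  have : algebraMap ℂ (Matrix n n ℂ) μ = Matrix.scalar n μ := rfl
  rw [this] at hu
  rw [h] at hu
  exact hu.ne_zero rfl

lemma aux_unitary_trace_eq_one {n : ℕ} (U : Matrix (Fin n) (Fin n) ℂ)
    (hU : Uᴴ * U = 1) (htr : U.trace = n) : U = 1 := by
  have hcol : ∀ i : Fin n, ∑ j, Complex.normSq (U j i) = 1 := by
    intro i
    have h1 : (Uᴴ * U) i i = (1 : Matrix (Fin n) (Fin n) ℂ) i i := by rw [hU]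
    rw [Matrix.mul_apply, Matrix.one_apply_eq] at h1
    have h2 : ∀ j, Uᴴ i j * U j i = (Complex.normSq (U j i) : ℂ) := by
      intro j
      rw [Matrix.conjTranspose_apply, Complex.normSq_eq_conj_mul_self]; rfl
    rw [Finset.sum_congr rfl fun j _ => h2 j] at h1
    have := congrArg Complex.re h1
    simpa using this
  have hre_le : ∀ i : Fin n, (U i i).re ≤ 1 := by
    intro i
    have h1 : Complex.normSq (U i i) ≤ 1 := by
      rw [← hcol i]
      exact Finset.single_le_sum (f := fun j => Complex.normSq (U j i)) (fun j _ => Complex.normSq_nonneg _) (Finset.mem_univ i)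
    have := Complex.normSq_apply (U i i)
    nlinarith [sq_nonneg ((U i i).re - 1), sq_nonneg (U i i).im]
  have hsum : ∑ i, (U i i).re = n := by
    have := congrArg Complex.re htr
    rw [Matrix.trace] at this
    simpa [Matrix.diag, Complex.re_sum] using this
  have hre : ∀ i : Fin n, (U i i).re = 1 := by
    have h0 : ∑ i : Fin n, (1 - (U i i).re) = 0 := by
      rw [Finset.sum_sub_distrib, hsum]; simp
    intro i
    have := (Finset.sum_eq_zero_iff_of_nonneg
      (fun j _ => by linarith [hre_le j])).mp h0 i (Finset.mem_univ i)
    linarith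
  have hdiag : ∀ i : Fin n, U i i = 1 := by
    intro i
    have h1 : Complex.normSq (U i i) ≤ 1 := by
      rw [← hcol i]
      exact Finset.single_le_sum (f := fun j => Complex.normSq (U j i)) (fun j _ => Complex.normSq_nonneg _) (Finset.mem_univ i)
    have h2 := Complex.normSq_apply (U i i)
    have him : (U i i).im = 0 := by nlinarith [hre i, sq_nonneg (U i i).im]
    exact Complex.ext (hre i) him
  have hoff : ∀ i j : Fin n, j ≠ i → U j i = 0 := by
    intro i j hji
    have h1 := hcol i
    rw [← Finset.add_sum_erase _ _ (Finset.mem_univ i), hdiag i] at h1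
    simp only [Complex.normSq_one] at h1
    have h2 : ∑ k ∈ Finset.univ.erase i, Complex.normSq (U k i) = 0 := by linarith
    have := (Finset.sum_eq_zero_iff_of_nonneg
      (fun k _ => Complex.normSq_nonneg _)).mp h2 j (Finset.mem_erase.mpr ⟨hji, Finset.mem_univ j⟩)
    exact Complex.normSq_eq_zero.mp this
  ext i j
  rcases eq_or_ne i j with rfl | hij
  · rw [hdiag i, Matrix.one_apply_eq]
  · rw [hoff j i hij, Matrix.one_apply_ne hij]

lemma aux_pairing {g : ℕ} {A B C D : Matrix (Fin g) (Fin g) ℂ}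
    (h : (fromBlocks A B C D)ᵀ * Matrix.J (Fin g) ℂ * fromBlocks A B C D = Matrix.J (Fin g) ℂ)
    (τ₁ τ₂ : Matrix (Fin g) (Fin g) ℂ) :
    (C * τ₂ + D)ᵀ * (A * τ₁ + B) - (A * τ₂ + B)ᵀ * (C * τ₁ + D) = τ₁ - τ₂ᵀ := by
  set M := fromBlocks A B C D with hM
  set Ω := Matrix.J (Fin g) ℂ with hΩ
  set W : Matrix (Fin g) (Fin g) ℂ → Matrix (Fin g ⊕ Fin g) (Fin g) ℂ :=
    fun σ => fromRows σ (1 : Matrix (Fin g) (Fin g) ℂ) with hW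
  have key : (M * W τ₂)ᵀ * (Ω * (M * W τ₁)) = (W τ₂)ᵀ * (Ω * W τ₁) := by
    rw [transpose_mul]
    calc (W τ₂)ᵀ * Mᵀ * (Ω * (M * W τ₁))
        = (W τ₂)ᵀ * (Mᵀ * Ω * M * W τ₁) := by
          simp only [Matrix.mul_assoc]
      _ = (W τ₂)ᵀ * (Ω * W τ₁) := by rw [h]
  have hMW : ∀ σ : Matrix (Fin g) (Fin g) ℂ,
      M * W σ = fromRows (A * σ + B) (C * σ + D) := by
    intro σ
    rw [hM, hW]
    simp only
    rw [fromBlocks_mul_fromRows]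
    simp
  have hΩW : ∀ X Y : Matrix (Fin g) (Fin g) ℂ,
      Ω * fromRows X Y = fromRows (-Y) X := by
    intro X Y
    rw [hΩ, Matrix.J, fromBlocks_mul_fromRows]
    simp
  have hWfr : ∀ σ : Matrix (Fin g) (Fin g) ℂ, W σ = fromRows σ 1 := fun _ => rfl
  rw [hMW, hMW, hWfr, hWfr, hΩW, hΩW, transpose_fromRows, transpose_fromRows,
    fromCols_mul_fromRows, fromCols_mul_fromRows] at key
  simp only [transpose_one, Matrix.mul_neg, Matrix.one_mul, Matrix.mul_one] at key
  linear_combination (norm := skip) key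
  abel

/-- If `γ ∈ Sp(2g, ℤ)` is nontrivial and fixes `τ ∈ ℍ_g`, then
`C_γ τ + D_γ` has an eigenvalue different from `1`. -/
theorem cocycle_has_nonone_eigenvalue {g : ℕ}
    (γ : Matrix (Fin g ⊕ Fin g) (Fin g ⊕ Fin g) ℤ)
    (hγ : γ ∈ Matrix.symplecticGroup (Fin g) ℤ)
    (hne : γ ≠ 1)
    (τ : Matrix (Fin g) (Fin g) ℂ) (hτ : τ ∈ SiegelUpperHalfSpace g)
    (hfix : siegelAction (γ.map (Int.cast : ℤ → ℝ)) τ = τ) :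
    ∃ μ ∈ spectrum ℂ (siegelCocycle (γ.map (Int.cast : ℤ → ℝ)) τ), μ ≠ 1 := by
  by_contra hcon
  push_neg at hcon
  set Mℝ := γ.map (Int.cast : ℤ → ℝ) with hMℝ
  set A := (Mℝ.toBlocks₁₁).map Complex.ofReal with hA
  set B := (Mℝ.toBlocks₁₂).map Complex.ofReal with hB
  set C := (Mℝ.toBlocks₂₁).map Complex.ofReal with hC
  set D := (Mℝ.toBlocks₂₂).map Complex.ofReal with hD
  have hJc : siegelCocycle Mℝ τ = C * τ + D := rfl
  rw [hJc] at hcon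
  set J₀ := C * τ + D with hJ₀
  -- real entries
  have hAr : A.map (starRingEnd ℂ) = A := by
    ext i j; simp [hA, Matrix.map_apply]
  have hBr : B.map (starRingEnd ℂ) = B := by
    ext i j; simp [hB, Matrix.map_apply]
  have hCr : C.map (starRingEnd ℂ) = C := by
    ext i j; simp [hC, Matrix.map_apply]
  have hDr : D.map (starRingEnd ℂ) = D := by
    ext i j; simp [hD, Matrix.map_apply]
  -- symplectic over ℂ
  have hMc : fromBlocks A B C D = γ.map (Int.cast : ℤ → ℂ) := by
    ext i j
    cases i <;> cases j <;>
      simp [hA, hB, hC, hD, hMℝ, Matrix.fromBlocks, Matrix.toBlocks₁₁, Matrix.toBlocks₁₂,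
        Matrix.toBlocks₂₁, Matrix.toBlocks₂₂, Matrix.map_apply, Matrix.submatrix_apply]
  have hsymp : (fromBlocks A B C D)ᵀ * Matrix.J (Fin g) ℂ * fromBlocks A B C D
      = Matrix.J (Fin g) ℂ := by
    have h0 := SymplecticGroup.mem_iff'.mp hγ
    have h1 := congrArg (fun X => X.map (Int.cast : ℤ → ℂ)) h0
    have hmm : ∀ X Y : Matrix (Fin g ⊕ Fin g) (Fin g ⊕ Fin g) ℤ,
        (X * Y).map (Int.cast : ℤ → ℂ) = X.map (Int.cast : ℤ → ℂ) * Y.map (Int.cast : ℤ → ℂ) :=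
      fun X Y => Matrix.map_mul (f := Int.castRingHom ℂ)
    have hJmap : (Matrix.J (Fin g) ℤ).map (Int.cast : ℤ → ℂ) = Matrix.J (Fin g) ℂ := by
      ext i j
      cases i <;> cases j <;>
        simp [Matrix.J, Matrix.fromBlocks, Matrix.map_apply, Matrix.one_apply]
    have htm : (γᵀ).map (Int.cast : ℤ → ℂ) = (γ.map (Int.cast : ℤ → ℂ))ᵀ :=
      by rw [Matrix.transpose_map]
    rw [hmm, hmm, htm, hJmap] at h1
    rw [hMc, h1]
  -- spectral facts
  have hroots : J₀.charpoly.roots = Multiset.replicate g 1 := by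
    rw [Multiset.eq_replicate]
    constructor
    · rw [(Polynomial.splits_iff_card_roots).mp (IsAlgClosed.splits _),
        Matrix.charpoly_natDegree_eq_dim, Fintype.card_fin]
    · intro b hb
      have hroot : J₀.charpoly.IsRoot b :=
        (Polynomial.mem_roots J₀.charpoly_monic.ne_zero).mp hb
      exact hcon b (aux_mem_spectrum_of_isRoot_charpoly J₀ hroot)
  have htr : J₀.trace = (g : ℂ) := by
    rw [Matrix.trace_eq_sum_roots_charpoly, hroots, Multiset.sum_replicate]
    simp
  have hdet : J₀.det = 1 := by
    rw [Matrix.det_eq_prod_roots_charpoly, hroots, Multiset.prod_replicate, one_pow]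
  have hJu : IsUnit J₀.det := by rw [hdet]; exact isUnit_one
  -- fixed point equation
  have heq : A * τ + B = τ * J₀ := by
    have h0 : (A * τ + B) * J₀⁻¹ = τ := hfix
    calc A * τ + B = (A * τ + B) * (J₀⁻¹ * J₀) := by
          rw [Matrix.nonsing_inv_mul _ hJu, Matrix.mul_one]
      _ = ((A * τ + B) * J₀⁻¹) * J₀ := by rw [Matrix.mul_assoc]
      _ = τ * J₀ := by rw [h0]
  -- conjugates
  set τ' := τ.map (starRingEnd ℂ) with hτ'
  set J₀' := C * τ' + D with hJ₀'
  have hmapconj : ∀ X Y : Matrix (Fin g) (Fin g) ℂ,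
      (X * Y).map (starRingEnd ℂ) = X.map (starRingEnd ℂ) * Y.map (starRingEnd ℂ) :=
    fun X Y => Matrix.map_mul (f := starRingEnd ℂ)
  have hmapadd : ∀ X Y : Matrix (Fin g) (Fin g) ℂ,
      (X + Y).map (starRingEnd ℂ) = X.map (starRingEnd ℂ) + Y.map (starRingEnd ℂ) := by
    intro X Y; ext i j; simp
  have hJ₀conj : J₀.map (starRingEnd ℂ) = J₀' := by
    rw [hJ₀, hJ₀', hmapadd, hmapconj, hCr, hDr]
  have heq' : A * τ' + B = τ' * J₀' := by
    have := congrArg (fun X => X.map (starRingEnd ℂ)) heq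
    simp only [hmapadd, hmapconj, hAr, hBr, hCr, hDr, hJ₀conj] at this
    exact this
  -- symmetry
  have hτs : τᵀ = τ := hτ.1
  have hτ's : τ'ᵀ = τ' := by
    rw [hτ']
    ext i j
    simp only [Matrix.transpose_apply, Matrix.map_apply]
    have h2 := congrFun (congrFun hτs i) j
    simp only [Matrix.transpose_apply] at h2
    rw [h2]
  -- pairing identity
  have hpair := aux_pairing hsymp τ τ'
  rw [heq, heq', hτ's] at hpair
  have hkey : J₀'ᵀ * (τ - τ') * J₀ = τ - τ' := by
    have h1 : (τ' * J₀')ᵀ = J₀'ᵀ * τ' := by rw [Matrix.transpose_mul, hτ's]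
    calc J₀'ᵀ * (τ - τ') * J₀
        = J₀'ᵀ * (τ * J₀) - (τ' * J₀')ᵀ * J₀ := by
          rw [h1]
          rw [Matrix.mul_sub, Matrix.sub_mul, Matrix.mul_assoc, Matrix.mul_assoc]
      _ = τ - τ' := hpair
  -- imaginary part
  set Y : Matrix (Fin g) (Fin g) ℝ := fun i j => (τ i j).im with hYdef
  have hY : Y.PosDef := hτ.2
  set Yc := Y.map Complex.ofReal with hYc
  have hP : τ - τ' = (2 * Complex.I) • Yc := by
    ext i j
    simp only [Matrix.sub_apply, Matrix.smul_apply, Matrix.map_apply, hτ', hYc,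
      Matrix.map_apply, smul_eq_mul]
    rw [Complex.sub_conj]
    push_cast
    ring
  have hYJ : J₀'ᵀ * Yc * J₀ = Yc := by
    have h2 := hkey
    rw [hP, Matrix.mul_smul, Matrix.smul_mul] at h2
    have h2I : (2 * Complex.I) ≠ 0 := by
      simp [Complex.I_ne_zero]
    exact smul_right_injective _ h2I h2
  -- square root
  open MatrixOrder in set S := CFC.sqrt Y with hSdef
  have hSS : S * S = Y := open MatrixOrder in CFC.sqrt_mul_sqrt_self Y hY.posSemidef.nonneg
  have hSherm : Sᴴ = S := open MatrixOrder in (CFC.sqrt_nonneg Y).posSemidef.1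
  set Sc := S.map Complex.ofReal with hScdef
  have hScH : Scᴴ = Sc := by
    ext i j
    have h2 := congrFun (congrFun hSherm i) j
    simp only [Matrix.conjTranspose_apply, star_trivial] at h2
    simp only [Matrix.conjTranspose_apply, Matrix.map_apply, hScdef, h2]
    simp
  have hScSc : Sc * Sc = Yc := by
    rw [hYc, ← hSS]
    ext i j
    simp only [Matrix.mul_apply, Matrix.map_apply]
    push_cast
    rfl
  have hdetYc : Yc.det = ((Y.det : ℝ) : ℂ) := by
    have h2 := RingHom.map_det Complex.ofRealHom Y
    exact h2.symm
  have hYdet_ne : Yc.det ≠ 0 := by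
    rw [hdetYc]
    exact_mod_cast hY.det_pos.ne'
  have hSc_unit : IsUnit Sc.det := by
    rw [isUnit_iff_ne_zero]
    intro h2
    apply hYdet_ne
    rw [← hScSc, Matrix.det_mul, h2, mul_zero]
  -- the unitary matrix
  set U := Sc * J₀ * Sc⁻¹ with hUdef
  have hJH : J₀ᴴ = J₀'ᵀ := by
    rw [← hJ₀conj]
    ext i j
    simp [Matrix.conjTranspose_apply, Matrix.transpose_apply, Matrix.map_apply]
  have hUH : Uᴴ = Sc⁻¹ * J₀'ᵀ * Sc := by
    rw [hUdef, Matrix.conjTranspose_mul, Matrix.conjTranspose_mul,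
      Matrix.conjTranspose_nonsing_inv, hScH, hJH]
    simp only [Matrix.mul_assoc]
  have hUU : Uᴴ * U = 1 := by
    have h2 : Uᴴ * U = Sc⁻¹ * ((J₀'ᵀ * Yc) * J₀) * Sc⁻¹ := by
      rw [hUH, hUdef, ← hScSc]
      simp only [Matrix.mul_assoc]
    rw [h2, hYJ, ← hScSc, ← Matrix.mul_assoc Sc⁻¹ Sc Sc,
      Matrix.nonsing_inv_mul _ hSc_unit, Matrix.one_mul,
      Matrix.mul_nonsing_inv _ hSc_unit]
  have htrU : U.trace = (g : ℂ) := by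
    rw [hUdef, Matrix.trace_mul_comm (Sc * J₀) Sc⁻¹, ← Matrix.mul_assoc,
      Matrix.nonsing_inv_mul _ hSc_unit, Matrix.one_mul, htr]
  have hU1 : U = 1 := aux_unitary_trace_eq_one U hUU htrU
  have hJ₀1 : J₀ = 1 := by
    have h2 : Sc⁻¹ * (Sc * J₀ * Sc⁻¹) * Sc = J₀ := by
      rw [Matrix.mul_assoc Sc⁻¹ _ Sc, Matrix.mul_assoc (Sc * J₀) Sc⁻¹ Sc,
        Matrix.nonsing_inv_mul _ hSc_unit, Matrix.mul_one, ← Matrix.mul_assoc,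
        Matrix.nonsing_inv_mul _ hSc_unit, Matrix.one_mul]
    rw [show Sc * J₀ * Sc⁻¹ = U from rfl, hU1, Matrix.mul_one,
      Matrix.nonsing_inv_mul _ hSc_unit] at h2
    exact h2.symm
  have hJ₀'1 : J₀' = 1 := by
    rw [← hJ₀conj, hJ₀1]
    ext i j
    simp [Matrix.map_apply, Matrix.one_apply, apply_ite (starRingEnd ℂ)]
  -- conclude γ = 1
  have heqτ : A * τ + B = τ := by rw [heq, hJ₀1, Matrix.mul_one]
  have heqτ' : A * τ' + B = τ' := by rw [heq', hJ₀'1, Matrix.mul_one]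
  set Q := fromBlocks τ τ' (1 : Matrix (Fin g) (Fin g) ℂ) (1 : Matrix (Fin g) (Fin g) ℂ)
    with hQdef
  have hMQ : fromBlocks A B C D * Q = Q := by
    rw [hQdef, fromBlocks_multiply]
    simp only [Matrix.mul_one]
    rw [heqτ, heqτ', show C * τ + D = 1 from hJ₀1, show C * τ' + D = 1 from hJ₀'1]
  have hdetQ : IsUnit Q.det := by
    rw [hQdef, Matrix.det_fromBlocks_one₂₂, Matrix.mul_one, hP, Matrix.det_smul]
    rw [isUnit_iff_ne_zero]
    apply mul_ne_zero
    · apply pow_ne_zero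
      simp [Complex.I_ne_zero]
    · exact hYdet_ne
  have hM1 : fromBlocks A B C D = 1 := by
    calc fromBlocks A B C D = (fromBlocks A B C D * Q) * Q⁻¹ := by
          rw [Matrix.mul_assoc, Matrix.mul_nonsing_inv _ hdetQ, Matrix.mul_one]
      _ = Q * Q⁻¹ := by rw [hMQ]
      _ = 1 := Matrix.mul_nonsing_inv _ hdetQ
  apply hne
  have hγ1 : γ.map (Int.cast : ℤ → ℂ) = 1 := by rw [← hMc, hM1]
  ext i j
  have h2 := congrFun (congrFun hγ1 i) j
  simp only [Matrix.map_apply] at h2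
  by_cases hij : i = j
  · subst hij
    rw [Matrix.one_apply_eq] at h2 ⊢
    exact_mod_cast h2
  · rw [Matrix.one_apply_ne hij] at h2 ⊢
    exact_mod_cast h2
end
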